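/- Let T be a string, let B be a prefix of T that occurs at least once in T, and let p be the smallest period of B. Partition the set of starting positions of occurrences of B in T into maximal arithmetic progressions with common difference p, and let Δ ≥ 2 be the minimum number of terms over these progressions. If |B| + Δ·p ≤ |T| and the prefix B'' of T of length |B| + Δ·p has period p, then B'' is NOT a cover of T. (Concretely, if i, i+p, ..., i+(Δ−1)p is a maximal progression of occurrences of B with exactly Δ terms, then position i+p of T is not covered by any occurrence of B''.) -/
import Mathlib

section Defs

variable {α : Type*}

/-- `C` occurs in `T` at starting position `i`. -/
def OccursAt (C T : List α) (i : ℕ) : Prop :=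
  i + C.length ≤ T.length ∧ (T.drop i).take C.length = C

/-- `C` is a cover of `T`: `C` occurs in `T` and every position of `T`
lies within an occurrence of `C`. -/
def IsCover (C T : List α) : Prop :=
  (∃ i, OccursAt C T i) ∧
    ∀ q, q < T.length → ∃ i, OccursAt C T i ∧ i ≤ q ∧ q < i + C.length

/-- A border of `T` is both a prefix and a suffix of `T`. -/
def IsBorder (B T : List α) : Prop := B <+: T ∧ B <:+ T

/-- `p` is a period of `U`: `U[i] = U[i+p]` for all `0 ≤ i < |U| - p`. -/
def IsPeriod (p : ℕ) (U : List α) : Prop :=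
  0 < p ∧ ∀ i, i + p < U.length → U[i]? = U[i + p]?

/-- `U` is aperiodic: its smallest period `p` satisfies `2p > |U|`
(equivalently, every period `p` of `U` satisfies `2p > |U|`). -/
def StrAperiodic (U : List α) : Prop := ∀ p, IsPeriod p U → U.length < 2 * p

/-- A nonempty string `X` is primitive if `X = Y^t` implies `t = 1`. -/
def StrPrimitive (X : List α) : Prop :=
  X ≠ [] ∧ ∀ (Y : List α) (t : ℕ), X = (List.replicate t Y).flatten → t = 1

/-- A string is superprimitive if it has no proper cover. -/
def Superprimitive (T : List α) : Prop :=
  ¬ ∃ C : List α, IsCover C T ∧ C.length < T.length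

/-- The length of the shortest cover of `T`. -/
noncomputable def covLen (T : List α) : ℕ :=
  sInf {c | ∃ C : List α, C.length = c ∧ IsCover C T}

/-- `{a, a+p, ..., a+(t-1)p}` is a maximal arithmetic progression with
difference `p` inside the set `S`. -/
def MaxProg (S : Set ℕ) (p a t : ℕ) : Prop :=
  0 < t ∧ (∀ r, r < t → a + r * p ∈ S) ∧ (∀ b, b + p = a → b ∉ S) ∧ a + t * p ∉ S

end Defs

section Aux

variable {α : Type*}

lemma occ_iff (C T : List α) (x : ℕ) :
    OccursAt C T x ↔ x + C.length ≤ T.length ∧ ∀ i, i < C.length → T[x+i]? = C[i]? := by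
  constructor
  · rintro ⟨h1, h2⟩
    refine ⟨h1, fun i hi => ?_⟩
    have h3 : ((T.drop x).take C.length)[i]? = C[i]? := by rw [h2]
    rwa [List.getElem?_take, if_pos hi, List.getElem?_drop] at h3
  · rintro ⟨h1, h2⟩
    refine ⟨h1, ?_⟩
    apply List.ext_getElem?
    intro i
    rw [List.getElem?_take]
    by_cases hi : i < C.length
    · rw [if_pos hi, List.getElem?_drop, h2 i hi]
    · rw [if_neg hi, eq_comm, List.getElem?_eq_none_iff]
      omega

/-- Two occurrences of `B` at distance `0 < e < p` contradict the minimality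
of the period `p`. -/
lemma dist_occ {T B : List α} {p : ℕ} (hmin : ∀ q, IsPeriod q B → p ≤ q)
    {x e : ℕ} (he : 0 < e) (hep : e < p)
    (h1 : OccursAt B T x) (h2 : OccursAt B T (x+e)) : False := by
  rw [occ_iff] at h1 h2
  have hq : IsPeriod e B := by
    refine ⟨he, fun i hie => ?_⟩
    have e1 := h1.2 (i+e) hie
    have e2 := h2.2 i (by omega)
    rw [show x + (i+e) = x + e + i by omega] at e1
    rw [← e1, ← e2]
  have := hmin e hq
  omega

/-- An occurrence of the periodic prefix `T.take (|B| + Δp)` at `s` yields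
occurrences of `B` at `s + k·p` for all `k ≤ Δ`. -/
lemma shift_occ {T B : List α} {p Δ : ℕ} (hpre : B <+: T)
    (hlen : B.length + Δ*p ≤ T.length)
    (hper'' : IsPeriod p (T.take (B.length + Δ*p)))
    {s : ℕ} (hs : OccursAt (T.take (B.length + Δ*p)) T s)
    {k : ℕ} (hk : k ≤ Δ) : OccursAt B T (s + k*p) := by
  set L := B.length + Δ*p with hL
  have hlenB'' : (T.take L).length = L := by
    rw [List.length_take]; omega
  have hBpre : ∀ i, i < B.length → (T.take L)[i]? = B[i]? := by
    intro i hi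
    rw [List.getElem?_take, if_pos (by omega : i < L)]
    have hiT : i < T.length := by omega
    rw [List.getElem?_eq_getElem hiT, List.getElem?_eq_getElem hi]
    exact congrArg some (hpre.getElem hi).symm
  have hstep : ∀ m, m + p < L → (T.take L)[m]? = (T.take L)[m+p]? := by
    intro m hm; exact hper''.2 m (by rw [hlenB'']; omega)
  have key : ∀ k, k ≤ Δ → ∀ i, i < B.length → (T.take L)[k*p+i]? = B[i]? := by
    intro k
    induction k with
    | zero =>
      intro _ i hi
      rw [show 0*p+i = i by omega]
      exact hBpre i hi
    | succ n ih =>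
      intro hn i hi
      have hnp : (n+1)*p = n*p + p := by ring
      have hmul : (n+1)*p ≤ Δ*p := Nat.mul_le_mul_right p hn
      have h1 : n*p + i + p < L := by omega
      have h2 := hstep (n*p+i) h1
      rw [hnp, show n*p+p+i = n*p+i+p by omega, ← h2]
      exact ih (by omega) i hi
  rw [occ_iff] at hs ⊢
  rw [hlenB''] at hs
  have hkp : k*p ≤ Δ*p := Nat.mul_le_mul_right p hk
  refine ⟨by omega, fun i hi => ?_⟩
  have h2 := hs.2 (k*p+i) (by omega)
  rw [show s + (k*p+i) = s + k*p + i by omega] at h2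
  rw [h2]
  exact key k hk i hi

/-- Extending an occurrence of `B` one period to the left, inside the
`p`-periodic region covered by an occurrence of `T.take (|B| + Δp)`. -/
lemma ext_occ {T B : List α} {p Δ : ℕ} (hper : IsPeriod p B)
    (hlen : B.length + Δ*p ≤ T.length)
    (hper'' : IsPeriod p (T.take (B.length + Δ*p)))
    {s b : ℕ} (hs : OccursAt (T.take (B.length + Δ*p)) T s)
    (hb : OccursAt B T (b+p)) (hge : s + Δ*p ≤ b)
    (hlt : b + p + p < s + (B.length + Δ*p)) :
    OccursAt B T b := by
  set L := B.length + Δ*p with hL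
  have hlenB'' : (T.take L).length = L := by
    rw [List.length_take]; omega
  rw [occ_iff] at hb ⊢
  have hs' := (occ_iff _ _ _).mp hs
  rw [hlenB''] at hs'
  refine ⟨by omega, fun i hi => ?_⟩
  by_cases hcase : b + p + i < s + L
  · obtain ⟨j, hj⟩ : ∃ j, b + i = s + j := ⟨b + i - s, by omega⟩
    have hjp : j + p < L := by omega
    have e1 := hs'.2 j (by omega)
    have e2 := hs'.2 (j+p) (by omega)
    have e3 := hper''.2 j (by rw [hlenB'']; omega)
    have e4 := hb.2 i hi
    rw [hj, e1, e3, ← e2, show s + (j+p) = b+p+i by omega, e4]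
  · have hip : p < i := by omega
    have e4 := hb.2 (i-p) (by omega)
    have e5 := hper.2 (i-p) (by omega : i - p + p < B.length)
    rw [show b + i = b + p + (i-p) by omega, e4, e5, show i - p + p = i by omega]

end Aux

/-- Let `B` be a prefix of `T` occurring at least once in `T`, with smallest
period `p`. If `Δ ≥ 2` is the minimum number of terms over the maximal
arithmetic progressions (with difference `p`) of starting positions of
occurrences of `B` in `T`, `|B| + Δp ≤ |T|`, and the prefix `B''` of `T` of
length `|B| + Δp` has period `p`, then `B''` is not a cover of `T`; concretely,
for any maximal progression `a, a+p, ..., a+(Δ-1)p` with exactly `Δ` terms,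
position `a + p` of `T` is not covered by any occurrence of `B''`. -/
theorem stmt2 {α : Type*} (T B : List α) (p Δ : ℕ)
    (hpre : B <+: T) (hocc : ∃ s, OccursAt B T s)
    (hper : IsPeriod p B) (hmin : ∀ q, IsPeriod q B → p ≤ q)
    (hΔ : 2 ≤ Δ)
    (hlb : ∀ a t, MaxProg {s | OccursAt B T s} p a t → Δ ≤ t)
    (hach : ∃ a, MaxProg {s | OccursAt B T s} p a Δ)
    (hlen : B.length + Δ * p ≤ T.length)
    (hper'' : IsPeriod p (T.take (B.length + Δ * p))) :
    ¬ IsCover (T.take (B.length + Δ * p)) T ∧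
      ∀ a, MaxProg {s | OccursAt B T s} p a Δ →
        ¬ ∃ s, OccursAt (T.take (B.length + Δ * p)) T s ∧
            s ≤ a + p ∧ a + p < s + (B.length + Δ * p) := by
  have hp : 0 < p := hper.1
  -- B is nonempty
  have hB : 0 < B.length := by
    by_contra hB0
    have hBnil : B.length = 0 := by omega
    have hp1 : p = 1 := by
      have h1 := hmin 1 ⟨Nat.one_pos, fun i hi => absurd hi (by omega)⟩
      omega
    have hmem : ∀ x, OccursAt B T x ↔ x ≤ T.length := by
      intro x; rw [occ_iff]
      constructor
      · intro h; omega
      · intro h; exact ⟨by omega, fun i hi => absurd hi (by omega)⟩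
    obtain ⟨a, ht, h2, h3, h4⟩ := hach
    rw [hp1, mul_one] at hlen
    rw [hp1] at h2 h3 h4
    have haS := h2 0 (by omega)
    simp only [Set.mem_setOf_eq, Nat.zero_mul, Nat.add_zero, hmem] at haS
    have ha0 : a = 0 := by
      by_contra ha
      have hnot := h3 (a-1) (by omega)
      simp only [Set.mem_setOf_eq, hmem] at hnot
      omega
    subst ha0
    simp only [Set.mem_setOf_eq, Nat.mul_one, Nat.zero_add, hmem] at h4
    omega
  -- the main claim: the second bullet
  have main : ∀ a, MaxProg {s | OccursAt B T s} p a Δ →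
      ¬ ∃ s, OccursAt (T.take (B.length + Δ * p)) T s ∧
          s ≤ a + p ∧ a + p < s + (B.length + Δ * p) := by
    rintro a hmax ⟨s, hs, hsle, hslt⟩
    obtain ⟨-, h2, h3, h4⟩ := hmax
    simp only [Set.mem_setOf_eq] at h2 h3 h4
    have hkocc : ∀ k, k ≤ Δ → OccursAt B T (s + k*p) :=
      fun k hk => shift_occ hpre hlen hper'' hs hk
    have haS : OccursAt B T a := by
      have := h2 0 (by omega); rwa [Nat.zero_mul, Nat.add_zero] at this
    have ha1 : OccursAt B T (a+p) := by
      have := h2 1 (by omega); rwa [Nat.one_mul] at this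
    obtain ⟨d, hde⟩ : ∃ d, a + p = s + d := ⟨a + p - s, by omega⟩
    obtain ⟨k, rem, hrem, hmod⟩ : ∃ k rem, rem < p ∧ k * p + rem = d :=
      ⟨d / p, d % p, Nat.mod_lt _ hp, by rw [Nat.mul_comm]; exact Nat.div_add_mod d p⟩
    by_cases hk : k ≤ Δ
    · -- Case I: a + p lands within the progression s, s+p, ..., s+Δp
      have hskp : OccursAt B T (s + k*p) := hkocc k hk
      have hrem0 : rem = 0 := by
        by_contra h
        exact dist_occ hmin (by omega) hrem hskp
          (by rw [show s + k*p + rem = a + p by omega]; exact ha1)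
      have hake : a + p = s + k * p := by omega
      by_cases hk1 : k ≤ 1
      · -- a + Δp is an occurrence, contradicting maximality on the right
        have hx := hkocc (k+Δ-1) (by omega)
        have e1 : k+Δ-1+1 = k+Δ := by omega
        have e2 : (k+Δ)*p = k*p + Δ*p := Nat.add_mul _ _ _
        have e3 : (k+Δ-1+1)*p = (k+Δ-1)*p + p := Nat.succ_mul _ _
        rw [e1] at e3
        have heq : a + Δ*p = s + (k+Δ-1)*p := by omega
        exact h4 (by rw [heq]; exact hx)
      · -- a - p is an occurrence, contradicting maximality on the left
        have hx := hkocc (k-2) (by omega)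
        have e3 : (k-2+1)*p = (k-2)*p + p := Nat.succ_mul _ _
        have e4 : (k-2+1+1)*p = (k-2+1)*p + p := Nat.succ_mul _ _
        have e5 : k-2+1+1 = k := by omega
        rw [e5] at e4
        exact h3 (s + (k-2)*p) (by omega) hx
    · -- Case II: a + p is beyond s + Δp
      have hsΔ : OccursAt B T (s + Δ*p) := hkocc Δ le_rfl
      have hmul : (Δ+1)*p ≤ k*p := Nat.mul_le_mul_right p (by omega)
      have hsucc : (Δ+1)*p = Δ*p + p := Nat.succ_mul _ _
      obtain ⟨e, he⟩ : ∃ e, a = s + Δ*p + e := ⟨a - (s + Δ*p), by omega⟩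
      rcases Nat.eq_zero_or_pos e with he0 | hepos
      · -- a = s + Δp : then s + (Δ-1)p witnesses an occurrence at a - p
        have hx := hkocc (Δ-1) (by omega)
        have e3 : (Δ-1+1)*p = (Δ-1)*p + p := Nat.succ_mul _ _
        have e5 : Δ-1+1 = Δ := by omega
        rw [e5] at e3
        exact h3 (s + (Δ-1)*p) (by omega) hx
      · by_cases hep : e < p
        · exact dist_occ hmin hepos hep hsΔ
            (by rw [show s + Δ*p + e = a by omega]; exact haS)
        · -- e ≥ p : extend the occurrence at a one period to the left
          have hx : OccursAt B T (a - p) := by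
            apply ext_occ hper hlen hper'' hs
              (show OccursAt B T (a - p + p) from by
                rw [show a - p + p = a by omega]; exact haS)
              (by omega) (by omega)
          exact h3 (a - p) (by omega) hx
  refine ⟨?_, main⟩
  rintro ⟨-, hcov⟩
  obtain ⟨a, hmax⟩ := hach
  have ha1 : OccursAt B T (a+p) := by
    have := hmax.2.1 1 (by omega)
    simpa using this
  have hq : a + p < T.length := by
    have h1 := ((occ_iff _ _ _).mp ha1).1
    omega
  obtain ⟨i, hi, hle, hlt⟩ := hcov (a+p) hq
  have hlenB'' : (T.take (B.length + Δ*p)).length = B.length + Δ*p := by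
    rw [List.length_take]; omega
  rw [hlenB''] at hlt
  exact main a hmax ⟨i, hi, hle, hlt⟩
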